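/- (Proposition 3) Suppose there is a nonzero constant K with χ'(φ)/χ(φ) ≤ 2K/((2−γ)(4−3γ)), and V satisfies: V ≥ 0, lim_{φ→−∞} V(φ) = +∞, V' continuous with V'(φ) < 0 for all φ, and V' bounded on every set on which V is bounded. Then along any solution with H(t₀) > 0 and ρ_m(t₀), ρ_r(t₀) > 0, lim_{t→∞} (ρ_m, ρ_r, y) = (0,0,0) and lim_{t→∞} φ(t) = +∞. -/

import Mathlib

open Filter Set Topology
open MeasureTheory intervalIntegral

set_option maxHeartbeats 1000000


lemma barbalat (f g : ℝ → ℝ) (t₀ C M : ℝ) (hM : 0 < M)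
    (hf : ∀ t, t₀ ≤ t → HasDerivAt f (g t) t)
    (hg : ∀ t, t₀ ≤ t → -M ≤ g t)
    (hnn : ∀ t, t₀ ≤ t → 0 ≤ f t)
    (hint : ∀ T, t₀ ≤ T → (∫ t in t₀..T, f t) ≤ C) :
    Tendsto f atTop (𝓝 0) := by
  have hfc : ContinuousOn f (Ici t₀) := fun t ht => (hf t ht).continuousAt.continuousWithinAt
  have hfint : ∀ a b : ℝ, t₀ ≤ a → a ≤ b → IntervalIntegrable f volume a b := by
    intro a b ha h
    refine (hfc.mono ?_).intervalIntegrable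
    rw [uIcc_of_le h]
    exact Icc_subset_Ici_self.trans (Ici_subset_Ici.2 ha)
  have hlip : ∀ s u : ℝ, t₀ ≤ s → s ≤ u → f s - M * (u - s) ≤ f u := by
    intro s u hs hsu
    have hmono : MonotoneOn (fun t => f t + M * t) (Ici s) := by
      apply monotoneOn_of_deriv_nonneg (convex_Ici s)
      · exact fun t ht => (((hf t (hs.trans ht)).add
          ((hasDerivAt_id t).const_mul M)).continuousAt).continuousWithinAt
      · intro t ht
        rw [interior_Ici] at ht
        exact (((hf t (hs.trans ht.le)).add
          ((hasDerivAt_id t).const_mul M)).differentiableAt).differentiableWithinAt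
      · intro t ht
        rw [interior_Ici] at ht
        have hD : HasDerivAt (fun t => f t + M * t) (g t + M * 1) t := by
          exact (hf t (hs.trans ht.le)).add ((hasDerivAt_id t).const_mul M)
        rw [hD.deriv]
        have := hg t (hs.trans ht.le)
        linarith
    have := hmono (by exact mem_Ici.2 le_rfl) (mem_Ici.2 hsu) hsu
    simp only at this
    nlinarith
  -- main argument
  by_contra hcon
  -- f ≥ 0 eventually, so failure of tendsto means: ∃ ε > 0, ∀ N, ∃ t ≥ N, ε ≤ f t
  have hbig : ∃ ε > 0, ∀ N : ℝ, ∃ t, N ≤ t ∧ t₀ ≤ t ∧ ε ≤ f t := by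
    by_contra hno
    push_neg at hno
    apply hcon
    rw [Metric.tendsto_atTop]
    intro ε hε
    obtain ⟨N, hN⟩ : ∃ N : ℝ, ∀ t, N ≤ t → t₀ ≤ t → f t < ε/2 := hno (ε/2) (by linarith)
    refine ⟨max N t₀, fun t ht => ?_⟩
    have h1 : N ≤ t := le_trans (le_max_left _ _) ht
    have h2 : t₀ ≤ t := le_trans (le_max_right _ _) ht
    rw [Real.dist_eq, sub_zero, abs_of_nonneg (hnn t h2)]
    exact lt_of_lt_of_le (hN t h1 h2) (by linarith)
  obtain ⟨ε, hε, hseq⟩ := hbig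
  set δ := ε / (2 * M) with hδ
  have hδpos : 0 < δ := div_pos hε (by linarith)
  -- each excursion contributes εδ/2 to the integral
  have key : ∀ n : ℕ, ∃ T, t₀ ≤ T ∧ n * (ε * δ / 2) ≤ ∫ t in t₀..T, f t := by
    intro n
    induction n with
    | zero => exact ⟨t₀, le_rfl, by simp⟩
    | succ n ih =>
      obtain ⟨T, hT0, hT⟩ := ih
      obtain ⟨t, htT, ht0, htf⟩ := hseq T
      have hpiece : ε * δ / 2 ≤ ∫ s in t..(t+δ), f s := by
        have hlb : ∀ s ∈ Icc t (t+δ), ε/2 ≤ f s := by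
          intro s hs
          have := hlip t s ht0 hs.1
          have hsub : s - t ≤ δ := by linarith [hs.2]
          have : f t - M * δ ≤ f s := by nlinarith [hs.1]
          have hMδ : M * δ = ε/2 := by rw [hδ, mul_div_assoc', div_eq_div_iff (by positivity) (by norm_num)]; ring
          linarith
        calc ε * δ / 2 = ∫ _ in t..(t+δ), (ε/2 : ℝ) := by
              rw [intervalIntegral.integral_const]; simp; ring
          _ ≤ ∫ s in t..(t+δ), f s := by
              apply intervalIntegral.integral_mono_on (by linarith)
                (intervalIntegrable_const) (hfint t (t+δ) ht0 (by linarith))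
              exact hlb
      have hTt : T ≤ t := htT
      have i1 : IntervalIntegrable f volume t₀ T := hfint t₀ T le_rfl hT0
      have i2 : IntervalIntegrable f volume T t := hfint T t hT0 hTt
      have i3 : IntervalIntegrable f volume t (t+δ) := hfint t (t+δ) ht0 (by linarith)
      have hsplit : (∫ s in t₀..(t+δ), f s)
          = (∫ s in t₀..T, f s) + ((∫ s in T..t, f s) + (∫ s in t..(t+δ), f s)) := by
        rw [intervalIntegral.integral_add_adjacent_intervals i2 i3,
            intervalIntegral.integral_add_adjacent_intervals i1 (i2.trans i3)]
      have hmid : 0 ≤ ∫ s in T..t, f s := by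
        apply intervalIntegral.integral_nonneg hTt
        intro s hs
        exact hnn s (hT0.trans hs.1)
      refine ⟨t + δ, by linarith, ?_⟩
      rw [hsplit]
      push_cast
      nlinarith
  obtain ⟨n, hn⟩ := exists_nat_gt ((C + 1) / (ε * δ / 2))
  obtain ⟨T, hT0, hT⟩ := key n
  have hC := hint T hT0
  have hεδ : 0 < ε * δ / 2 := by positivity
  have : (C+1)/(ε*δ/2) * (ε*δ/2) < n * (ε*δ/2) := by
    apply mul_lt_mul_of_pos_right hn hεδ
  rw [div_mul_cancel₀] at this
  · linarith
  · exact ne_of_gt hεδ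

/-- Proposition 3: if `χ'/χ ≤ 2K/((2−γ)(4−3γ))` for some `K ≠ 0`, `V ≥ 0`,
`V(φ) → +∞` as `φ → −∞`, `V'` is continuous and negative everywhere, and `V'`
is bounded on every set where `V` is bounded, then along any solution with
`H(t₀) > 0`, `ρ_m(t₀) > 0`, `ρ_r(t₀) > 0`, one has `(ρ_m, ρ_r, y) → (0,0,0)`
and `φ(t) → +∞` as `t → ∞`. -/
theorem stmt6 (H ρm ρr y φ V χ : ℝ → ℝ) (γ t₀ K : ℝ)
    (hγ0 : 0 < γ) (hγ2 : γ < 2) (hγ43 : γ ≠ 4/3)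
    (hχpos : ∀ s, 0 < χ s)
    (hVC2 : ContDiff ℝ 2 V) (hχC2 : ContDiff ℝ 2 χ)
    (hVnn : ∀ s, 0 ≤ V s)
    (hVinf : Tendsto V atBot atTop)
    (hV'cont : Continuous (deriv V))
    (hV'neg : ∀ s, deriv V s < 0)
    (hV'bdd : ∀ A : Set ℝ, (∃ B, ∀ s ∈ A, V s ≤ B) → ∃ B', ∀ s ∈ A, |deriv V s| ≤ B')
    (hK : K ≠ 0)
    (hχbd : ∀ s, deriv χ s / χ s ≤ 2*K / ((2-γ)*(4-3*γ)))
    (hH : ∀ t, t₀ ≤ t →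
      HasDerivAt H (-(1/2) * (γ * ρm t + (4/3) * ρr t + (y t)^2)) t)
    (hm : ∀ t, t₀ ≤ t →
      HasDerivAt ρm (-3*γ*H t*ρm t - (1/2)*(4-3*γ)*ρm t*y t*(deriv χ (φ t) / χ (φ t))) t)
    (hr : ∀ t, t₀ ≤ t → HasDerivAt ρr (-4*H t*ρr t) t)
    (hy : ∀ t, t₀ ≤ t →
      HasDerivAt y (-3*H t*y t - deriv V (φ t) + (1/2)*(4-3*γ)*ρm t*(deriv χ (φ t) / χ (φ t))) t)
    (hφ : ∀ t, t₀ ≤ t → HasDerivAt φ (y t) t)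
    (hconstraint : ∀ t, t₀ ≤ t →
      3*(H t)^2 = (1/2)*(y t)^2 + V (φ t) + ρm t + ρr t)
    (hmnn : ∀ t, t₀ ≤ t → 0 ≤ ρm t)
    (hrnn : ∀ t, t₀ ≤ t → 0 ≤ ρr t)
    (hH0 : 0 < H t₀) (hm0 : 0 < ρm t₀) (hr0 : 0 < ρr t₀) :
    (Tendsto ρm atTop (nhds 0) ∧ Tendsto ρr atTop (nhds 0) ∧
      Tendsto y atTop (nhds 0)) ∧ Tendsto φ atTop atTop := by
  -- V is strictly decreasing and positive
  have hVanti : StrictAnti V := strictAnti_of_deriv_neg hV'neg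
  have hVpos : ∀ s, 0 < V s := by
    intro s
    rcases lt_or_eq_of_le (hVnn s) with h | h
    · exact h
    · exfalso
      have h1 : V (s+1) < V s := hVanti (by linarith)
      rw [← h] at h1
      exact absurd (hVnn (s+1)) (not_le.2 h1)
  -- H is positive on [t₀, ∞)
  have hHpos : ∀ t, t₀ ≤ t → 0 < H t := by
    intro t₁ ht₁
    by_contra hc
    push_neg at hc
    have hzero : ∃ t₂ ∈ Icc t₀ t₁, H t₂ = 0 := by
      rcases eq_or_lt_of_le hc with h | h
      · exact ⟨t₁, ⟨ht₁, le_rfl⟩, h⟩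
      · have hcont : ContinuousOn H (Icc t₀ t₁) := fun t ht =>
          (hH t ht.1).continuousAt.continuousWithinAt
        have := intermediate_value_Icc' ht₁ hcont (a := t₀) (b := t₁)
          (mem_Icc.2 ⟨hc, hH0.le⟩)
        obtain ⟨t₂, ht₂, hH2⟩ := this
        exact ⟨t₂, ht₂, hH2⟩
    obtain ⟨t₂, ht₂, hH2⟩ := hzero
    have hcst := hconstraint t₂ ht₂.1
    rw [hH2] at hcst
    nlinarith [hVpos (φ t₂), hmnn t₂ ht₂.1, hrnn t₂ ht₂.1, sq_nonneg (y t₂)]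
  -- H is antitone on [t₀, ∞)
  have hHanti : AntitoneOn H (Ici t₀) := by
    apply antitoneOn_of_deriv_nonpos (convex_Ici t₀)
    · exact fun t ht => (hH t ht).continuousAt.continuousWithinAt
    · intro t ht
      rw [interior_Ici] at ht
      exact ((hH t ht.le).differentiableAt).differentiableWithinAt
    · intro t ht
      rw [interior_Ici] at ht
      rw [(hH t ht.le).deriv]
      nlinarith [hmnn t ht.le, hrnn t ht.le, sq_nonneg (y t)]
  set B := 3 * (H t₀)^2 with hB
  have hBpos : 0 < B := by positivity
  have hHle : ∀ t, t₀ ≤ t → H t ≤ H t₀ := fun t ht => hHanti (mem_Ici.2 le_rfl) (mem_Ici.2 ht) ht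
  have hsum : ∀ t, t₀ ≤ t → (1/2)*(y t)^2 + V (φ t) + ρm t + ρr t ≤ B := by
    intro t ht
    rw [← hconstraint t ht]
    have h1 : 0 < H t := hHpos t ht
    nlinarith [hHle t ht]
  have hmB : ∀ t, t₀ ≤ t → ρm t ≤ B := by
    intro t ht; nlinarith [hsum t ht, hVpos (φ t), hrnn t ht, sq_nonneg (y t)]
  have hrB : ∀ t, t₀ ≤ t → ρr t ≤ B := by
    intro t ht; nlinarith [hsum t ht, hVpos (φ t), hmnn t ht, sq_nonneg (y t)]
  have hyB : ∀ t, t₀ ≤ t → (y t)^2 ≤ 2*B := by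
    intro t ht; nlinarith [hsum t ht, hVpos (φ t), hmnn t ht, hrnn t ht]
  have hVB : ∀ t, t₀ ≤ t → V (φ t) ≤ B := by
    intro t ht; nlinarith [hsum t ht, hmnn t ht, hrnn t ht, sq_nonneg (y t)]
  have hyabs : ∀ t, t₀ ≤ t → |y t| ≤ Real.sqrt (2*B) := by
    intro t ht
    rw [← Real.sqrt_sq_eq_abs]
    exact Real.sqrt_le_sqrt (hyB t ht)
  -- bound on V' along the orbit
  obtain ⟨B', hB'⟩ := hV'bdd {s | V s ≤ B} ⟨B, fun s hs => hs⟩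
  have hB'nn : 0 ≤ B' := le_trans (abs_nonneg _) (hB' (φ t₀) (hVB t₀ le_rfl))
  have hV'orb : ∀ t, t₀ ≤ t → |deriv V (φ t)| ≤ B' := fun t ht => hB' (φ t) (hVB t ht)
  -- integral bound on W
  set W := fun t => γ * ρm t + (4/3) * ρr t + (y t)^2 with hW
  have hWcont : ContinuousOn W (Ici t₀) := by
    apply ContinuousOn.add
    apply ContinuousOn.add
    · exact continuousOn_const.mul (fun t ht => (hm t ht).continuousAt.continuousWithinAt)
    · exact continuousOn_const.mul (fun t ht => (hr t ht).continuousAt.continuousWithinAt)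
    · have hyc : ContinuousOn y (Ici t₀) := fun t ht => (hy t ht).continuousAt.continuousWithinAt
      exact hyc.pow 2
  have hWint : ∀ a b, t₀ ≤ a → a ≤ b → IntervalIntegrable W volume a b := by
    intro a b ha h
    refine (hWcont.mono ?_).intervalIntegrable
    rw [uIcc_of_le h]
    exact Icc_subset_Ici_self.trans (Ici_subset_Ici.2 ha)
  have hWI : ∀ T, t₀ ≤ T → (∫ t in t₀..T, W t) ≤ 2 * H t₀ := by
    intro T hT
    have hftc : (∫ t in t₀..T, -(1/2) * W t) = H T - H t₀ := by
      apply intervalIntegral.integral_eq_sub_of_hasDerivAt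
      · intro t ht
        rw [uIcc_of_le hT] at ht
        exact hH t ht.1
      · exact (hWint t₀ T le_rfl hT).const_mul _
    rw [intervalIntegral.integral_const_mul] at hftc
    have hHT := hHpos T hT
    linarith
  -- componentwise integral bounds
  have hcompI : ∀ (c : ℝ) (f : ℝ → ℝ), 0 < c →
      (∀ a b, t₀ ≤ a → a ≤ b → IntervalIntegrable f volume a b) →
      (∀ t, t₀ ≤ t → c * f t ≤ W t) →
      ∀ T, t₀ ≤ T → (∫ t in t₀..T, f t) ≤ 2 * H t₀ / c := by
    intro c f hc hfint hle T hT
    have h1 : c * (∫ t in t₀..T, f t) = ∫ t in t₀..T, c * f t := by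
      rw [intervalIntegral.integral_const_mul]
    have h2 : (∫ t in t₀..T, c * f t) ≤ ∫ t in t₀..T, W t := by
      apply intervalIntegral.integral_mono_on hT ((hfint t₀ T le_rfl hT).const_mul c)
        (hWint t₀ T le_rfl hT)
      intro s hs
      exact hle s hs.1
    have h3 := hWI T hT
    rw [le_div_iff₀ hc]
    nlinarith
  -- continuity facts
  have hmc : ContinuousOn ρm (Ici t₀) := fun t ht => (hm t ht).continuousAt.continuousWithinAt
  have hrc : ContinuousOn ρr (Ici t₀) := fun t ht => (hr t ht).continuousAt.continuousWithinAt
  have hyc : ContinuousOn y (Ici t₀) := fun t ht => (hy t ht).continuousAt.continuousWithinAt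
  -- Barbalat applied to Q := ρm + (1/2) y²
  set Q := fun t => ρm t + (1/2)*(y t)^2 with hQ
  set dQ := fun t => -3*γ*H t*ρm t - 3*H t*(y t)^2 - deriv V (φ t) * y t with hdQ
  have hQderiv : ∀ t, t₀ ≤ t → HasDerivAt Q (dQ t) t := by
    intro t ht
    have h1 : HasDerivAt (fun t => ρm t + (1/2)*(y t)^2) _ t := (hm t ht).add (((hy t ht).pow 2).const_mul (1/2))
    convert h1 using 1
    simp only [hdQ]
    ring
  set M₁ := 3*γ*(H t₀)*B + 3*(H t₀)*(2*B) + B'*Real.sqrt (2*B) + 1 with hM₁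
  have hM₁pos : 0 < M₁ := by
    have h1 : 0 ≤ B' * Real.sqrt (2*B) := mul_nonneg hB'nn (Real.sqrt_nonneg _)
    have h2 : 0 ≤ 3*γ*(H t₀)*B := by positivity
    have h3 : 0 ≤ 3*(H t₀)*(2*B) := by positivity
    simp only [hM₁]
    linarith
  have hdQlb : ∀ t, t₀ ≤ t → -M₁ ≤ dQ t := by
    intro t ht
    have h1 : |deriv V (φ t) * y t| ≤ B' * Real.sqrt (2*B) := by
      rw [abs_mul]
      exact mul_le_mul (hV'orb t ht) (hyabs t ht) (abs_nonneg _) hB'nn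
    have h2 := abs_le.1 h1
    have h3 : 3*γ*H t*ρm t ≤ 3*γ*(H t₀)*B := by
      have hmul : H t * ρm t ≤ H t₀ * B :=
        mul_le_mul (hHle t ht) (hmB t ht) (hmnn t ht) hH0.le
      nlinarith [hγ0]
    have h4 : 3*H t*(y t)^2 ≤ 3*(H t₀)*(2*B) := by
      have hmul : H t * (y t)^2 ≤ H t₀ * (2*B) :=
        mul_le_mul (hHle t ht) (hyB t ht) (sq_nonneg _) hH0.le
      nlinarith
    simp only [hdQ, hM₁]
    nlinarith [h2.1]
  have hQnn : ∀ t, t₀ ≤ t → 0 ≤ Q t := by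
    intro t ht
    have := hmnn t ht
    simp only [hQ]
    nlinarith [sq_nonneg (y t)]
  set c₁ := min γ 1 with hc₁
  have hc₁pos : 0 < c₁ := lt_min hγ0 one_pos
  have hQI : ∀ T, t₀ ≤ T → (∫ t in t₀..T, Q t) ≤ 2 * H t₀ / c₁ := by
    apply hcompI c₁ Q hc₁pos
    · intro a b ha h
      have hQcont : ContinuousOn Q (Ici t₀) := hmc.add (continuousOn_const.mul (hyc.pow 2))
      refine (hQcont.mono ?_).intervalIntegrable
      rw [uIcc_of_le h]
      exact Icc_subset_Ici_self.trans (Ici_subset_Ici.2 ha)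
    · intro t ht
      have hg1 : c₁ ≤ γ := min_le_left _ _
      have hg2 : c₁ ≤ 1 := min_le_right _ _
      have := hmnn t ht
      have := hrnn t ht
      simp only [hQ, hW]
      nlinarith [sq_nonneg (y t)]
  have hQ0 : Tendsto Q atTop (𝓝 0) :=
    barbalat Q dQ t₀ (2 * H t₀ / c₁) M₁ hM₁pos hQderiv hdQlb hQnn hQI
  -- ρm → 0 and y → 0
  have hm0' : Tendsto ρm atTop (𝓝 0) := by
    apply tendsto_of_tendsto_of_tendsto_of_le_of_le' tendsto_const_nhds hQ0
    · filter_upwards [eventually_ge_atTop t₀] with t ht using hmnn t ht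
    · filter_upwards [eventually_ge_atTop t₀] with t ht using by
        simp only [hQ]; nlinarith [sq_nonneg (y t)]
  have hy2 : Tendsto (fun t => (y t)^2) atTop (𝓝 0) := by
    have h2Q : Tendsto (fun t => 2 * Q t) atTop (𝓝 0) := by
      have h := hQ0.const_mul (2:ℝ)
      rw [mul_zero] at h
      exact h
    apply tendsto_of_tendsto_of_tendsto_of_le_of_le' tendsto_const_nhds h2Q
    · filter_upwards with t using sq_nonneg (y t)
    · filter_upwards [eventually_ge_atTop t₀] with t ht using by
        simp only [hQ]; nlinarith [hmnn t ht]
  have hy0 : Tendsto y atTop (𝓝 0) := by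
    have habs : Tendsto (fun t => |y t|) atTop (𝓝 0) := by
      have h1 : Tendsto (fun t => Real.sqrt ((y t)^2)) atTop (𝓝 (Real.sqrt 0)) :=
        (Real.continuous_sqrt.tendsto 0).comp hy2
      rw [Real.sqrt_zero] at h1
      convert h1 using 2 with t
      rw [Real.sqrt_sq_eq_abs]
    exact tendsto_zero_iff_abs_tendsto_zero y |>.2 habs
  -- ρr → 0
  have hr0' : Tendsto ρr atTop (𝓝 0) := by
    apply barbalat ρr (fun t => -4*H t*ρr t) t₀ (2 * H t₀ / (4/3)) (4*(H t₀)*B + 1)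
    · positivity
    · exact hr
    · intro t ht
      have := hHpos t ht
      have := hHle t ht
      have := hrnn t ht
      have := hrB t ht
      nlinarith
    · exact hrnn
    · apply hcompI (4/3) ρr (by norm_num)
      · intro a b ha h
        refine (hrc.mono ?_).intervalIntegrable
        rw [uIcc_of_le h]
        exact Icc_subset_Ici_self.trans (Ici_subset_Ici.2 ha)
      · intro t ht
        have := hmnn t ht
        simp only [hW]
        nlinarith [sq_nonneg (y t)]
  -- limit of H
  have hHtilde : Antitone (fun t => H (max t t₀)) := by
    intro s t hst
    exact hHanti (mem_Ici.2 (le_max_right s t₀)) (mem_Ici.2 (le_max_right t t₀))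
      (max_le_max hst le_rfl)
  have hbddH : BddBelow (range (fun t => H (max t t₀))) := by
    refine ⟨0, ?_⟩
    rintro x ⟨t, rfl⟩
    exact (hHpos _ (le_max_right _ _)).le
  set L := ⨅ t : ℝ, H (max t t₀) with hLdef
  have hHtendsto' : Tendsto (fun t => H (max t t₀)) atTop (𝓝 L) :=
    tendsto_atTop_ciInf hHtilde hbddH
  have hHtendsto : Tendsto H atTop (𝓝 L) := by
    apply hHtendsto'.congr'
    filter_upwards [eventually_ge_atTop t₀] with t ht
    rw [max_eq_left ht]
  -- V ∘ φ tends to 3 L²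
  have hVφ : Tendsto (fun t => V (φ t)) atTop (𝓝 (3*L^2)) := by
    have h3H : Tendsto (fun t => 3*(H t)^2 - (1/2)*(y t)^2 - ρm t - ρr t) atTop
        (𝓝 (3*L^2 - (1/2)*0 - 0 - 0)) :=
      ((((hHtendsto.pow 2).const_mul 3).sub (hy2.const_mul (1/2))).sub hm0').sub hr0'
    norm_num at h3H
    apply h3H.congr'
    filter_upwards [eventually_ge_atTop t₀] with t ht
    have := hconstraint t ht
    linarith
  -- infimum of V
  have hVbddbelow : BddBelow (range V) := ⟨0, by rintro x ⟨s, rfl⟩; exact hVnn s⟩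
  set ℓ := ⨅ s : ℝ, V s with hℓdef
  have hℓlt : ∀ s, ℓ < V s := fun s =>
    lt_of_le_of_lt (ciInf_le hVbddbelow (s+1)) (hVanti (lt_add_one s))
  -- rule out 3L² > ℓ
  have hνle : 3*L^2 ≤ ℓ := by
    by_contra hgt
    push_neg at hgt
    obtain ⟨s₂, hs₂⟩ := exists_lt_of_ciInf_lt hgt
    obtain ⟨s₁, hs₁⟩ : ∃ s, 3*L^2 < V s := (hVinf.eventually_gt_atTop (3*L^2)).exists
    have hs12 : s₁ < s₂ := by
      by_contra hc
      push_neg at hc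
      have : V s₁ ≤ V s₂ := hVanti.antitone hc
      linarith
    obtain ⟨p, hpmem, hp⟩ : ∃ x ∈ Icc s₁ s₂, V x = 3*L^2 := by
      have h := intermediate_value_Icc' hs12.le (hVC2.continuous.continuousOn)
      obtain ⟨x, hx, hVx⟩ := h (mem_Icc.2 ⟨hs₂.le, hs₁.le⟩)
      exact ⟨x, hx, hVx⟩
    have hφp : Tendsto φ atTop (𝓝 p) := by
      rw [tendsto_order]
      constructor
      · intro b hb
        have hVb : 3*L^2 < V b := by rw [← hp]; exact hVanti hb
        filter_upwards [hVφ.eventually_lt_const hVb] with t ht2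
        by_contra hc
        push_neg at hc
        have : V b ≤ V (φ t) := hVanti.antitone hc
        linarith
      · intro b hb
        have hVb : V b < 3*L^2 := by rw [← hp]; exact hVanti hb
        filter_upwards [hVφ.eventually_const_lt hVb] with t ht2
        by_contra hc
        push_neg at hc
        have : V (φ t) ≤ V b := hVanti.antitone hc
        linarith
    set d := -deriv V p with hd
    have hdpos : 0 < d := by
      have := hV'neg p
      simp only [hd]
      linarith
    have hgten : Tendsto (fun t => -3*H t*y t - deriv V (φ t)
        + (1/2)*(4-3*γ)*ρm t*(deriv χ (φ t) / χ (φ t))) atTop (𝓝 d) := by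
      have h1 : Tendsto (fun t => -3*H t*y t) atTop (𝓝 (-3*L*0)) := by
        exact (hHtendsto.const_mul (-3)).mul hy0
      have h2 : Tendsto (fun t => deriv V (φ t)) atTop (𝓝 (deriv V p)) :=
        (hV'cont.tendsto p).comp hφp
      have h3 : Tendsto (fun t => (1/2)*(4-3*γ)*ρm t*(deriv χ (φ t)/χ (φ t))) atTop
          (𝓝 ((1/2)*(4-3*γ)*0*(deriv χ p / χ p))) := by
        have hq : Tendsto (fun t => deriv χ (φ t) / χ (φ t)) atTop (𝓝 (deriv χ p / χ p)) :=
          Tendsto.div (((hχC2.continuous_deriv one_le_two).tendsto p).comp hφp)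
            ((hχC2.continuous.tendsto p).comp hφp) (ne_of_gt (hχpos p))
        exact (hm0'.const_mul ((1/2)*(4-3*γ))).mul hq
      have h := (h1.sub h2).add h3
      have heq : -3*L*0 - deriv V p + (1/2)*(4-3*γ)*0*(deriv χ p / χ p) = d := by
        simp only [hd]; ring
      rw [heq] at h
      exact h.congr (fun t => by ring)
    obtain ⟨T, hT⟩ := eventually_atTop.1
      ((hgten.eventually_const_lt (by linarith : d/2 < d)).and (eventually_ge_atTop t₀))
    set T' := max T t₀ with hT'
    have hT'0 : t₀ ≤ T' := le_max_right _ _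
    have hmono : MonotoneOn (fun t => y t - d/2*t) (Ici T') := by
      apply monotoneOn_of_deriv_nonneg (convex_Ici T')
      · intro t ht
        exact (((hy t (hT'0.trans ht)).sub
          ((hasDerivAt_id t).const_mul (d/2))).continuousAt).continuousWithinAt
      · intro t ht
        rw [interior_Ici] at ht
        exact (((hy t (hT'0.trans ht.le)).sub
          ((hasDerivAt_id t).const_mul (d/2))).differentiableAt).differentiableWithinAt
      · intro t ht
        rw [interior_Ici] at ht
        have hD : HasDerivAt (fun t => y t - d/2*t)
            ((-3*H t*y t - deriv V (φ t) + (1/2)*(4-3*γ)*ρm t*(deriv χ (φ t) / χ (φ t))) - d/2*1) t := by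
          exact (hy t (hT'0.trans ht.le)).sub ((hasDerivAt_id t).const_mul (d/2))
        rw [hD.deriv]
        have := (hT t ((le_max_left T t₀).trans ht.le)).1
        linarith
    have hlin : ∀ t, T' ≤ t → y T' + d/2*(t-T') ≤ y t := by
      intro t ht
      have := hmono (mem_Ici.2 (le_refl T')) (mem_Ici.2 ht) ht
      simp only at this
      nlinarith
    obtain ⟨N, hN⟩ := eventually_atTop.1 (hy0.eventually_lt_const (by norm_num : (0:ℝ) < 1))
    set t₁ := max N (T' + 2*(1+|y T'|)/d) with ht₁
    have ht₁T' : T' ≤ t₁ := by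
      have h1 : T' ≤ T' + 2*(1+|y T'|)/d := by
        have : 0 ≤ 2*(1+|y T'|)/d := by positivity
        linarith
      exact h1.trans (le_max_right _ _)
    have hyt₁ : 1 ≤ y t₁ := by
      have h1 := hlin t₁ ht₁T'
      have h2 : 2*(1+|y T'|)/d ≤ t₁ - T' := by
        have := le_max_right N (T' + 2*(1+|y T'|)/d)
        linarith [this.trans (le_refl t₁)]
      have h3 : (1+|y T'|) ≤ d/2*(t₁-T') := by
        have h4 := mul_le_mul_of_nonneg_left h2 (by positivity : (0:ℝ) ≤ d/2)
        have h5 : d/2*(2*(1+|y T'|)/d) = 1+|y T'| := by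
          field_simp
        rw [h5] at h4
        exact h4
      have h6 : -|y T'| ≤ y T' := neg_abs_le _
      linarith
    have := hN t₁ (le_max_left _ _)
    linarith
  -- conclusion: φ → ∞
  have hφtop : Tendsto φ atTop atTop := by
    rw [tendsto_atTop]
    intro M
    have hM : 3*L^2 < V M := lt_of_le_of_lt hνle (hℓlt M)
    filter_upwards [hVφ.eventually_lt_const hM] with t ht2
    by_contra hc
    push_neg at hc
    have : V M ≤ V (φ t) := hVanti.antitone hc.le
    linarith
  exact ⟨⟨hm0', hr0', hy0⟩, hφtop⟩
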